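/- arXiv:2008.13208 — 2 statements merged into one kernel-verified Lean document; each statement's English description precedes it below -/
import Mathlib

section
/- Let K be a field and consider the specialization of coefficients c_{11}^{(1)} = a (a parameter), c_{12}^{(3)} = c_{21}^{(2)} = c_{22}^{(1)} = c_{22}^{(2)} = c_{22}^{(3)} = 1, and all other c_{ij}^{(k)} = 0. Then the determinant of the 6×6 coefficient matrix of the system of linear forms in the variables y_{11}, y_{12}, y_{13}, y_{22}, y_{23}, y_{33} given by the forms F corresponding to det(B) and the minors M_{1,5,9,10}, M_{2,4,9,10}, M_{3,7,9,10}, M_{6,8,9,10}, M_{3,6,9,10} (as in the presentation matrix of the tangent image of B = [f_{ij}]) equals a^7 + a^6 up to sign, which is nonzero for a ∉ {0, -1}. -/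
namespace Stmt4
noncomputable section
open MvPolynomial

variable {K : Type*} [Field K]

/-- The entries of `B` under the specialization `c₁₁⁽¹⁾ = a`,
`c₁₂⁽³⁾ = c₂₁⁽²⁾ = c₂₂⁽¹⁾ = c₂₂⁽²⁾ = c₂₂⁽³⁾ = 1` and all other coefficients `0`
(only the first three variables occur, so we work in `K[x₁,x₂,x₃]`). -/
def f11 (a : K) (N : ℕ) : MvPolynomial (Fin 3) K := C a * X 0 ^ N
def f12 (K : Type*) [Field K] (N : ℕ) : MvPolynomial (Fin 3) K := X 2 ^ N
def f21 (K : Type*) [Field K] (N : ℕ) : MvPolynomial (Fin 3) K := X 1 ^ N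
def f22 (K : Type*) [Field K] (N : ℕ) : MvPolynomial (Fin 3) K :=
  X 0 ^ N + X 1 ^ N + X 2 ^ N

/-- The columns of the presentation matrix `Θ_{(G,B)}`: columns `0`–`3` are
`E_{pq}·B`, columns `4`–`7` are `B·E_{hl}`, and columns `8`, `9` are
`∂B/∂x₁`, `∂B/∂x₂`, all written as vectors in `R⁴` with the row ordering
`(f₁₁, f₂₁, f₁₂, f₂₂)`. -/
def col (a : K) (N : ℕ) : Fin 10 → Fin 4 → MvPolynomial (Fin 3) K :=
  ![![f11 a N, f21 K N, 0, 0],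
    ![f12 K N, f22 K N, 0, 0],
    ![0, 0, f11 a N, f21 K N],
    ![0, 0, f12 K N, f22 K N],
    ![f11 a N, 0, f12 K N, 0],
    ![f21 K N, 0, f22 K N, 0],
    ![0, f11 a N, 0, f12 K N],
    ![0, f21 K N, 0, f22 K N],
    ![pderiv 0 (f11 a N), pderiv 0 (f21 K N), pderiv 0 (f12 K N), pderiv 0 (f22 K N)],
    ![pderiv 1 (f11 a N), pderiv 1 (f21 K N), pderiv 1 (f12 K N), pderiv 1 (f22 K N)]]

/-- The `4 × 4` minor `M_{i₁+1, i₂+1, 9, 10}` of the presentation matrix. -/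
def minor (a : K) (N : ℕ) (i1 i2 : Fin 10) : MvPolynomial (Fin 3) K :=
  Matrix.det (Matrix.of fun r q : Fin 4 => col a N (![i1, i2, 8, 9] q) r)

/-- The variable indices `(i,j)` of `y_{ij}`, ordered
`y₁₁, y₁₂, y₁₃, y₂₂, y₂₃, y₃₃`. -/
def ypair : Fin 6 → Fin 3 × Fin 3 := ![(0,0), (0,1), (0,2), (1,1), (1,2), (2,2)]

/-- The exponent of the monomial `x_i^N x_j^N` corresponding to `y_{ij}`. -/
def mexp (N : ℕ) (q : Fin 6) : Fin 3 →₀ ℕ :=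
  Finsupp.single (ypair q).1 N + Finsupp.single (ypair q).2 N

/-- The exponent of `x₁^{N-1} x₂^{N-1}`, the factor appearing in
`M_{i₁,i₂,9,10} = F · N² x₁^{N-1} x₂^{N-1}`. -/
def d12 (N : ℕ) : Fin 3 →₀ ℕ :=
  Finsupp.single 0 (N - 1) + Finsupp.single 1 (N - 1)

/-- The pairs `(i₁,i₂)` (0-indexed) of the minors
`M_{1,5,9,10}, M_{2,4,9,10}, M_{3,7,9,10}, M_{6,8,9,10}, M_{3,6,9,10}`. -/
def pr : Fin 5 → Fin 10 × Fin 10 := ![(0,4), (1,3), (2,6), (5,7), (2,5)]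

/-- The `6 × 6` coefficient matrix of the system of linear forms in the
variables `y₁₁, y₁₂, y₁₃, y₂₂, y₂₃, y₃₃`: the first row is given by `det B`
(a linear form in the `y_{ij}`, whose `y_{ij}`-coefficient is the coefficient
of `x_i^N x_j^N`), and rows `1`–`5` by the linear forms `F` with
`M_{i₁,i₂,9,10} = F · N² x₁^{N-1} x₂^{N-1}` (so the `y_{ij}`-coefficient of
`F` is `N⁻²` times the coefficient of `x_i^N x_j^N x₁^{N-1} x₂^{N-1}` in the
minor). -/
def sys (a : K) (N : ℕ) : Matrix (Fin 6) (Fin 6) K :=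
  Matrix.of fun r q =>
    if h : r = 0 then
      coeff (mexp N q) (f11 a N * f22 K N - f12 K N * f21 K N)
    else
      ((N : K) ^ 2)⁻¹ *
        coeff (mexp N q + d12 N)
          (minor a N (pr (r.pred h)).1 (pr (r.pred h)).2)


set_option maxHeartbeats 2000000 in
lemma det_fin_four' {R : Type*} [CommRing R] (M : Matrix (Fin 4) (Fin 4) R) :
    M.det =
      M 0 0 * (M 1 1 * (M 2 2 * M 3 3 - M 2 3 * M 3 2)
              - M 1 2 * (M 2 1 * M 3 3 - M 2 3 * M 3 1)
              + M 1 3 * (M 2 1 * M 3 2 - M 2 2 * M 3 1))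
      - M 0 1 * (M 1 0 * (M 2 2 * M 3 3 - M 2 3 * M 3 2)
              - M 1 2 * (M 2 0 * M 3 3 - M 2 3 * M 3 0)
              + M 1 3 * (M 2 0 * M 3 2 - M 2 2 * M 3 0))
      + M 0 2 * (M 1 0 * (M 2 1 * M 3 3 - M 2 3 * M 3 1)
              - M 1 1 * (M 2 0 * M 3 3 - M 2 3 * M 3 0)
              + M 1 3 * (M 2 0 * M 3 1 - M 2 1 * M 3 0))
      - M 0 3 * (M 1 0 * (M 2 1 * M 3 2 - M 2 2 * M 3 1)
              - M 1 1 * (M 2 0 * M 3 2 - M 2 2 * M 3 0)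
              + M 1 2 * (M 2 0 * M 3 1 - M 2 1 * M 3 0)) := by
  rw [Matrix.det_succ_row_zero]
  simp [Fin.sum_univ_succ, Matrix.det_fin_three, Fin.succAbove,
    show (Fin.succ 2 : Fin 4) = 3 from rfl, show (Fin.castSucc 2 : Fin 4) = 2 from rfl,
    show ((1:Fin 4) < Fin.succ 2) from by decide]
  ring

def tr (p q r : ℕ) : Fin 3 →₀ ℕ :=
  Finsupp.single 0 p + Finsupp.single 1 q + Finsupp.single 2 r

lemma tr_eq_tr {p q r p' q' r' : ℕ} : tr p q r = tr p' q' r' ↔ p = p' ∧ q = q' ∧ r = r' := by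
  constructor
  · intro h
    refine ⟨?_, ?_, ?_⟩
    · simpa [tr, Finsupp.single_apply] using DFunLike.congr_fun h 0
    · simpa [tr, Finsupp.single_apply] using DFunLike.congr_fun h 1
    · simpa [tr, Finsupp.single_apply] using DFunLike.congr_fun h 2
  · rintro ⟨rfl, rfl, rfl⟩; rfl

lemma coeff_T (c : K) (p q r : ℕ) (e : Fin 3 →₀ ℕ) :
    coeff e (C c * (X 0 ^ p * X 1 ^ q * X 2 ^ r)) = if e = tr p q r then c else 0 := by
  have : (C c * (X 0 ^ p * X 1 ^ q * X 2 ^ r) : MvPolynomial (Fin 3) K)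
      = monomial (tr p q r) c := by
    simp [tr, X_pow_eq_monomial, monomial_mul, C_mul_monomial]
  rw [this, coeff_monomial]
  simp [eq_comm]

lemma pd0_f11 (a : K) (N : ℕ) : pderiv 0 (f11 a N) = C ((N:K) * a) * X 0 ^ (N-1) := by
  simp [f11, pderiv_C_mul, pderiv_pow]; ring
lemma pd0_f12 (N : ℕ) : pderiv 0 (f12 K N) = 0 := by
  simp [f12, pderiv_pow, pderiv_X, Pi.single_apply]
lemma pd0_f21 (N : ℕ) : pderiv 0 (f21 K N) = 0 := by
  simp [f21, pderiv_pow, pderiv_X, Pi.single_apply]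
lemma pd0_f22 (N : ℕ) : pderiv 0 (f22 K N) = C (N:K) * X 0 ^ (N-1) := by
  simp [f22, pderiv_pow, pderiv_X, Pi.single_apply]
lemma pd1_f11 (a : K) (N : ℕ) : pderiv 1 (f11 a N) = 0 := by
  simp [f11, pderiv_C_mul, pderiv_pow, pderiv_X, Pi.single_apply]
lemma pd1_f12 (N : ℕ) : pderiv 1 (f12 K N) = 0 := by
  simp [f12, pderiv_pow, pderiv_X, Pi.single_apply]
lemma pd1_f21 (N : ℕ) : pderiv 1 (f21 K N) = C (N:K) * X 1 ^ (N-1) := by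
  simp [f21, pderiv_pow, pderiv_X, Pi.single_apply]
lemma pd1_f22 (N : ℕ) : pderiv 1 (f22 K N) = C (N:K) * X 1 ^ (N-1) := by
  simp [f22, pderiv_pow, pderiv_X, Pi.single_apply]

lemma col0 (a : K) (N : ℕ) : col a N 0 = ![f11 a N, f21 K N, 0, 0] := rfl
lemma col1 (a : K) (N : ℕ) : col a N 1 = ![f12 K N, f22 K N, 0, 0] := rfl
lemma col2 (a : K) (N : ℕ) : col a N 2 = ![0, 0, f11 a N, f21 K N] := rfl
lemma col3 (a : K) (N : ℕ) : col a N 3 = ![0, 0, f12 K N, f22 K N] := rfl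
lemma col4 (a : K) (N : ℕ) : col a N 4 = ![f11 a N, 0, f12 K N, 0] := rfl
lemma col5 (a : K) (N : ℕ) : col a N 5 = ![f21 K N, 0, f22 K N, 0] := rfl
lemma col6 (a : K) (N : ℕ) : col a N 6 = ![0, f11 a N, 0, f12 K N] := rfl
lemma col7 (a : K) (N : ℕ) : col a N 7 = ![0, f21 K N, 0, f22 K N] := rfl
lemma col8 (a : K) (N : ℕ) : col a N 8 = ![pderiv 0 (f11 a N), pderiv 0 (f21 K N), pderiv 0 (f12 K N), pderiv 0 (f22 K N)] := rfl
lemma col9 (a : K) (N : ℕ) : col a N 9 = ![pderiv 1 (f11 a N), pderiv 1 (f21 K N), pderiv 1 (f12 K N), pderiv 1 (f22 K N)] := rfl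

lemma minor04 (a : K) (N : ℕ) :
    minor a N 0 4 =
      C ((N:K)^2*a) * (X 0 ^ (N-1) * X 1 ^ (N+(N-1)) * X 2 ^ (N))
      + C ((N:K)^2*a) * (X 0 ^ (N+(N-1)) * X 1 ^ (N-1) * X 2 ^ (N)) := by
  rw [minor, det_fin_four']
  simp only [Matrix.of_apply, Matrix.cons_val', Matrix.cons_val_zero, Matrix.cons_val_one,
    Matrix.head_cons, Matrix.cons_val_two, Matrix.tail_cons, Matrix.cons_val_three,
    Matrix.cons_val_fin_one, Matrix.empty_val', Matrix.head_fin_const]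
  rw [col0, col4, col8, col9]
  simp only [Matrix.cons_val_zero, Matrix.cons_val_one, Matrix.head_cons, Matrix.cons_val_two,
    Matrix.tail_cons, Matrix.cons_val_three]
  simp only [pd0_f11, pd0_f12, pd0_f21, pd0_f22, pd1_f11, pd1_f12, pd1_f21, pd1_f22]
  simp only [f11, f12, f21, f22, map_mul, map_pow, map_add, map_neg, map_one, map_ofNat]
  ring

lemma minor13 (a : K) (N : ℕ) :
    minor a N 1 3 =
      C ((N:K)^2*(1+a)) * (X 0 ^ (N-1) * X 1 ^ (N-1) * X 2 ^ (N+N))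
      + C ((N:K)^2*a) * (X 0 ^ (N-1) * X 1 ^ (N+(N-1)) * X 2 ^ (N))
      + C ((N:K)^2*a) * (X 0 ^ (N+(N-1)) * X 1 ^ (N-1) * X 2 ^ (N)) := by
  rw [minor, det_fin_four']
  simp only [Matrix.of_apply, Matrix.cons_val', Matrix.cons_val_zero, Matrix.cons_val_one,
    Matrix.head_cons, Matrix.cons_val_two, Matrix.tail_cons, Matrix.cons_val_three,
    Matrix.cons_val_fin_one, Matrix.empty_val', Matrix.head_fin_const]
  rw [col1, col3, col8, col9]
  simp only [Matrix.cons_val_zero, Matrix.cons_val_one, Matrix.head_cons, Matrix.cons_val_two,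
    Matrix.tail_cons, Matrix.cons_val_three]
  simp only [pd0_f11, pd0_f12, pd0_f21, pd0_f22, pd1_f11, pd1_f12, pd1_f21, pd1_f22]
  simp only [f11, f12, f21, f22, map_mul, map_pow, map_add, map_neg, map_one, map_ofNat]
  ring

lemma minor26 (a : K) (N : ℕ) :
    minor a N 2 6 =
      C ((N:K)^2*a^2) * (X 0 ^ (N+(N-1)) * X 1 ^ (N-1) * X 2 ^ (N))
      + C (-((N:K)^2*a^3)) * (X 0 ^ (N+N+(N-1)) * X 1 ^ (N-1) * X 2 ^ (0)) := by
  rw [minor, det_fin_four']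
  simp only [Matrix.of_apply, Matrix.cons_val', Matrix.cons_val_zero, Matrix.cons_val_one,
    Matrix.head_cons, Matrix.cons_val_two, Matrix.tail_cons, Matrix.cons_val_three,
    Matrix.cons_val_fin_one, Matrix.empty_val', Matrix.head_fin_const]
  rw [col2, col6, col8, col9]
  simp only [Matrix.cons_val_zero, Matrix.cons_val_one, Matrix.head_cons, Matrix.cons_val_two,
    Matrix.tail_cons, Matrix.cons_val_three]
  simp only [pd0_f11, pd0_f12, pd0_f21, pd0_f22, pd1_f11, pd1_f12, pd1_f21, pd1_f22]
  simp only [f11, f12, f21, f22, map_mul, map_pow, map_add, map_neg, map_one, map_ofNat]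
  ring

lemma minor57 (a : K) (N : ℕ) :
    minor a N 5 7 =
      C ((N:K)^2*a) * (X 0 ^ (N-1) * X 1 ^ (N-1) * X 2 ^ (N+N))
      + C ((N:K)^2*a) * (X 0 ^ (N-1) * X 1 ^ (N+(N-1)) * X 2 ^ (N))
      + C (2*(N:K)^2*a) * (X 0 ^ (N+(N-1)) * X 1 ^ (N-1) * X 2 ^ (N))
      + C ((N:K)^2*a) * (X 0 ^ (N+(N-1)) * X 1 ^ (N+(N-1)) * X 2 ^ (0))
      + C ((N:K)^2*a) * (X 0 ^ (N+N+(N-1)) * X 1 ^ (N-1) * X 2 ^ (0)) := by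
  rw [minor, det_fin_four']
  simp only [Matrix.of_apply, Matrix.cons_val', Matrix.cons_val_zero, Matrix.cons_val_one,
    Matrix.head_cons, Matrix.cons_val_two, Matrix.tail_cons, Matrix.cons_val_three,
    Matrix.cons_val_fin_one, Matrix.empty_val', Matrix.head_fin_const]
  rw [col5, col7, col8, col9]
  simp only [Matrix.cons_val_zero, Matrix.cons_val_one, Matrix.head_cons, Matrix.cons_val_two,
    Matrix.tail_cons, Matrix.cons_val_three]
  simp only [pd0_f11, pd0_f12, pd0_f21, pd0_f22, pd1_f11, pd1_f12, pd1_f21, pd1_f22]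
  simp only [f11, f12, f21, f22, map_mul, map_pow, map_add, map_neg, map_one, map_ofNat]
  ring

lemma minor25 (a : K) (N : ℕ) :
    minor a N 2 5 =
      C (-((N:K)^2*a)) * (X 0 ^ (N-1) * X 1 ^ (N+(N-1)) * X 2 ^ (N))
      + C (-((N:K)^2*a)) * (X 0 ^ (N-1) * X 1 ^ (N+N+(N-1)) * X 2 ^ (0))
      + C (-(2*(N:K)^2*a)) * (X 0 ^ (N+(N-1)) * X 1 ^ (N+(N-1)) * X 2 ^ (0)) := by
  rw [minor, det_fin_four']
  simp only [Matrix.of_apply, Matrix.cons_val', Matrix.cons_val_zero, Matrix.cons_val_one,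
    Matrix.head_cons, Matrix.cons_val_two, Matrix.tail_cons, Matrix.cons_val_three,
    Matrix.cons_val_fin_one, Matrix.empty_val', Matrix.head_fin_const]
  rw [col2, col5, col8, col9]
  simp only [Matrix.cons_val_zero, Matrix.cons_val_one, Matrix.head_cons, Matrix.cons_val_two,
    Matrix.tail_cons, Matrix.cons_val_three]
  simp only [pd0_f11, pd0_f12, pd0_f21, pd0_f22, pd1_f11, pd1_f12, pd1_f21, pd1_f22]
  simp only [f11, f12, f21, f22, map_mul, map_pow, map_add, map_neg, map_one, map_ofNat]
  ring

lemma detB_eq (a : K) (N : ℕ) :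
    f11 a N * f22 K N - f12 K N * f21 K N =
      C a * (X 0 ^ (N+N) * X 1 ^ 0 * X 2 ^ 0)
      + C a * (X 0 ^ N * X 1 ^ N * X 2 ^ 0)
      + C a * (X 0 ^ N * X 1 ^ 0 * X 2 ^ N)
      + C (-1 : K) * (X 0 ^ 0 * X 1 ^ N * X 2 ^ N) := by
  simp only [f11, f12, f21, f22, map_mul, map_pow, map_add, map_neg, map_one, map_ofNat]
  ring

lemma ypair0 : ypair 0 = (0,0) := rfl
lemma ypair1 : ypair 1 = (0,1) := rfl
lemma ypair2 : ypair 2 = (0,2) := rfl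
lemma ypair3 : ypair 3 = (1,1) := rfl
lemma ypair4 : ypair 4 = (1,2) := rfl
lemma ypair5 : ypair 5 = (2,2) := rfl

lemma mexp0 (N : ℕ) : mexp N 0 = tr (N+N) (0) (0) := by
  ext i; fin_cases i <;>
    simp [mexp, ypair0, tr, Finsupp.single_apply, Finsupp.add_apply] <;> omega

lemma mexp1 (N : ℕ) : mexp N 1 = tr (N) (N) (0) := by
  ext i; fin_cases i <;>
    simp [mexp, ypair1, tr, Finsupp.single_apply, Finsupp.add_apply] <;> omega

lemma mexp2 (N : ℕ) : mexp N 2 = tr (N) (0) (N) := by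
  ext i; fin_cases i <;>
    simp [mexp, ypair2, tr, Finsupp.single_apply, Finsupp.add_apply] <;> omega

lemma mexp3 (N : ℕ) : mexp N 3 = tr (0) (N+N) (0) := by
  ext i; fin_cases i <;>
    simp [mexp, ypair3, tr, Finsupp.single_apply, Finsupp.add_apply] <;> omega

lemma mexp4 (N : ℕ) : mexp N 4 = tr (0) (N) (N) := by
  ext i; fin_cases i <;>
    simp [mexp, ypair4, tr, Finsupp.single_apply, Finsupp.add_apply] <;> omega

lemma mexp5 (N : ℕ) : mexp N 5 = tr (0) (0) (N+N) := by
  ext i; fin_cases i <;>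
    simp [mexp, ypair5, tr, Finsupp.single_apply, Finsupp.add_apply] <;> omega

lemma mexpd0 (N : ℕ) : mexp N 0 + d12 N = tr ((N+N)+(N-1)) ((0)+(N-1)) ((0)) := by
  ext i; fin_cases i <;>
    simp [mexp, d12, ypair0, tr, Finsupp.single_apply, Finsupp.add_apply] <;> omega

lemma mexpd1 (N : ℕ) : mexp N 1 + d12 N = tr ((N)+(N-1)) ((N)+(N-1)) ((0)) := by
  ext i; fin_cases i <;>
    simp [mexp, d12, ypair1, tr, Finsupp.single_apply, Finsupp.add_apply] <;> omega

lemma mexpd2 (N : ℕ) : mexp N 2 + d12 N = tr ((N)+(N-1)) ((0)+(N-1)) ((N)) := by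
  ext i; fin_cases i <;>
    simp [mexp, d12, ypair2, tr, Finsupp.single_apply, Finsupp.add_apply] <;> omega

lemma mexpd3 (N : ℕ) : mexp N 3 + d12 N = tr ((0)+(N-1)) ((N+N)+(N-1)) ((0)) := by
  ext i; fin_cases i <;>
    simp [mexp, d12, ypair3, tr, Finsupp.single_apply, Finsupp.add_apply] <;> omega

lemma mexpd4 (N : ℕ) : mexp N 4 + d12 N = tr ((0)+(N-1)) ((N)+(N-1)) ((N)) := by
  ext i; fin_cases i <;>
    simp [mexp, d12, ypair4, tr, Finsupp.single_apply, Finsupp.add_apply] <;> omega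

lemma mexpd5 (N : ℕ) : mexp N 5 + d12 N = tr ((0)+(N-1)) ((0)+(N-1)) ((N+N)) := by
  ext i; fin_cases i <;>
    simp [mexp, d12, ypair5, tr, Finsupp.single_apply, Finsupp.add_apply] <;> omega


lemma sys_apply0 (a : K) (N : ℕ) (q : Fin 6) :
    sys a N 0 q = coeff (mexp N q) (f11 a N * f22 K N - f12 K N * f21 K N) := by
  simp [sys]

lemma sys_applyr (a : K) (N : ℕ) (r : Fin 5) (q : Fin 6) :
    sys a N r.succ q =
      ((N : K) ^ 2)⁻¹ *
        coeff (mexp N q + d12 N) (minor a N (pr r).1 (pr r).2) := by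
  have h : (r.succ : Fin 6) ≠ 0 := Fin.succ_ne_zero r
  simp [sys, h]


lemma sys_apply1 (a : K) (N : ℕ) (q : Fin 6) :
    sys a N 1 q = ((N : K) ^ 2)⁻¹ * coeff (mexp N q + d12 N) (minor a N 0 4) := by
  have h := sys_applyr a N 0 q
  rwa [show ((0:Fin 5).succ) = (1:Fin 6) from rfl,
    show pr 0 = (0,4) from rfl] at h


lemma sys_apply2 (a : K) (N : ℕ) (q : Fin 6) :
    sys a N 2 q = ((N : K) ^ 2)⁻¹ * coeff (mexp N q + d12 N) (minor a N 1 3) := by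
  have h := sys_applyr a N 1 q
  rwa [show ((1:Fin 5).succ) = (2:Fin 6) from rfl,
    show pr 1 = (1,3) from rfl] at h


lemma sys_apply3 (a : K) (N : ℕ) (q : Fin 6) :
    sys a N 3 q = ((N : K) ^ 2)⁻¹ * coeff (mexp N q + d12 N) (minor a N 2 6) := by
  have h := sys_applyr a N 2 q
  rwa [show ((2:Fin 5).succ) = (3:Fin 6) from rfl,
    show pr 2 = (2,6) from rfl] at h


lemma sys_apply4 (a : K) (N : ℕ) (q : Fin 6) :
    sys a N 4 q = ((N : K) ^ 2)⁻¹ * coeff (mexp N q + d12 N) (minor a N 5 7) := by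
  have h := sys_applyr a N 3 q
  rwa [show ((3:Fin 5).succ) = (4:Fin 6) from rfl,
    show pr 3 = (5,7) from rfl] at h


lemma sys_apply5 (a : K) (N : ℕ) (q : Fin 6) :
    sys a N 5 q = ((N : K) ^ 2)⁻¹ * coeff (mexp N q + d12 N) (minor a N 2 5) := by
  have h := sys_applyr a N 4 q
  rwa [show ((4:Fin 5).succ) = (5:Fin 6) from rfl,
    show pr 4 = (2,5) from rfl] at h


lemma row0 (a : K) (N : ℕ) (hN : 2 ≤ N) (hchar : (N : K) ≠ 0) (q : Fin 6) :
    sys a N 0 q = ![a, a, a, 0, -1, 0] q := by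
  rw [sys_apply0, detB_eq]
  have hq : q = 0 ∨ q = 1 ∨ q = 2 ∨ q = 3 ∨ q = 4 ∨ q = 5 := by revert q; decide
  rcases hq with rfl | rfl | rfl | rfl | rfl | rfl <;>
    (simp only [mexp0, mexp1, mexp2, mexp3, mexp4, mexp5, coeff_add, coeff_T, tr_eq_tr,
        zero_add, add_zero, true_and, and_true]
     simp only [show ((5:Fin 6)) = (4:Fin 5).succ from rfl, Matrix.cons_val_succ,
        Matrix.cons_val_zero, Matrix.cons_val_one, Matrix.head_cons, Matrix.cons_val_two,
        Matrix.tail_cons, Matrix.cons_val_three, Matrix.cons_val_four, Matrix.cons_val',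
        Matrix.cons_val_fin_one, Matrix.empty_val', Matrix.head_fin_const, if_true, if_false]
     split_ifs <;>
       first
         | omega
         | (field_simp; try ring)
         | norm_num)


lemma row1 (a : K) (N : ℕ) (hN : 2 ≤ N) (hchar : (N : K) ≠ 0) (q : Fin 6) :
    sys a N 1 q = ![0, 0, a, 0, a, 0] q := by
  rw [sys_apply1, minor04]
  have hq : q = 0 ∨ q = 1 ∨ q = 2 ∨ q = 3 ∨ q = 4 ∨ q = 5 := by revert q; decide
  rcases hq with rfl | rfl | rfl | rfl | rfl | rfl <;>
    (simp only [mexpd0, mexpd1, mexpd2, mexpd3, mexpd4, mexpd5, coeff_add, coeff_T, tr_eq_tr,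
        zero_add, add_zero, true_and, and_true]
     simp only [show ((5:Fin 6)) = (4:Fin 5).succ from rfl, Matrix.cons_val_succ,
        Matrix.cons_val_zero, Matrix.cons_val_one, Matrix.head_cons, Matrix.cons_val_two,
        Matrix.tail_cons, Matrix.cons_val_three, Matrix.cons_val_four, Matrix.cons_val',
        Matrix.cons_val_fin_one, Matrix.empty_val', Matrix.head_fin_const, if_true, if_false]
     split_ifs <;>
       first
         | omega
         | (field_simp; try ring)
         | norm_num)


lemma row2 (a : K) (N : ℕ) (hN : 2 ≤ N) (hchar : (N : K) ≠ 0) (q : Fin 6) :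
    sys a N 2 q = ![0, 0, a, 0, a, 1+a] q := by
  rw [sys_apply2, minor13]
  have hq : q = 0 ∨ q = 1 ∨ q = 2 ∨ q = 3 ∨ q = 4 ∨ q = 5 := by revert q; decide
  rcases hq with rfl | rfl | rfl | rfl | rfl | rfl <;>
    (simp only [mexpd0, mexpd1, mexpd2, mexpd3, mexpd4, mexpd5, coeff_add, coeff_T, tr_eq_tr,
        zero_add, add_zero, true_and, and_true]
     simp only [show ((5:Fin 6)) = (4:Fin 5).succ from rfl, Matrix.cons_val_succ,
        Matrix.cons_val_zero, Matrix.cons_val_one, Matrix.head_cons, Matrix.cons_val_two,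
        Matrix.tail_cons, Matrix.cons_val_three, Matrix.cons_val_four, Matrix.cons_val',
        Matrix.cons_val_fin_one, Matrix.empty_val', Matrix.head_fin_const, if_true, if_false]
     split_ifs <;>
       first
         | omega
         | (field_simp; try ring)
         | norm_num)


lemma row3 (a : K) (N : ℕ) (hN : 2 ≤ N) (hchar : (N : K) ≠ 0) (q : Fin 6) :
    sys a N 3 q = ![-a^3, 0, a^2, 0, 0, 0] q := by
  rw [sys_apply3, minor26]
  have hq : q = 0 ∨ q = 1 ∨ q = 2 ∨ q = 3 ∨ q = 4 ∨ q = 5 := by revert q; decide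
  rcases hq with rfl | rfl | rfl | rfl | rfl | rfl <;>
    (simp only [mexpd0, mexpd1, mexpd2, mexpd3, mexpd4, mexpd5, coeff_add, coeff_T, tr_eq_tr,
        zero_add, add_zero, true_and, and_true]
     simp only [show ((5:Fin 6)) = (4:Fin 5).succ from rfl, Matrix.cons_val_succ,
        Matrix.cons_val_zero, Matrix.cons_val_one, Matrix.head_cons, Matrix.cons_val_two,
        Matrix.tail_cons, Matrix.cons_val_three, Matrix.cons_val_four, Matrix.cons_val',
        Matrix.cons_val_fin_one, Matrix.empty_val', Matrix.head_fin_const, if_true, if_false]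
     split_ifs <;>
       first
         | omega
         | (field_simp; try ring)
         | norm_num)


lemma row4 (a : K) (N : ℕ) (hN : 2 ≤ N) (hchar : (N : K) ≠ 0) (q : Fin 6) :
    sys a N 4 q = ![a, a, 2*a, 0, a, a] q := by
  rw [sys_apply4, minor57]
  have hq : q = 0 ∨ q = 1 ∨ q = 2 ∨ q = 3 ∨ q = 4 ∨ q = 5 := by revert q; decide
  rcases hq with rfl | rfl | rfl | rfl | rfl | rfl <;>
    (simp only [mexpd0, mexpd1, mexpd2, mexpd3, mexpd4, mexpd5, coeff_add, coeff_T, tr_eq_tr,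
        zero_add, add_zero, true_and, and_true]
     simp only [show ((5:Fin 6)) = (4:Fin 5).succ from rfl, Matrix.cons_val_succ,
        Matrix.cons_val_zero, Matrix.cons_val_one, Matrix.head_cons, Matrix.cons_val_two,
        Matrix.tail_cons, Matrix.cons_val_three, Matrix.cons_val_four, Matrix.cons_val',
        Matrix.cons_val_fin_one, Matrix.empty_val', Matrix.head_fin_const, if_true, if_false]
     split_ifs <;>
       first
         | omega
         | (field_simp; try ring)
         | norm_num)


lemma row5 (a : K) (N : ℕ) (hN : 2 ≤ N) (hchar : (N : K) ≠ 0) (q : Fin 6) :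
    sys a N 5 q = ![0, -2*a, 0, -a, -a, 0] q := by
  rw [sys_apply5, minor25]
  have hq : q = 0 ∨ q = 1 ∨ q = 2 ∨ q = 3 ∨ q = 4 ∨ q = 5 := by revert q; decide
  rcases hq with rfl | rfl | rfl | rfl | rfl | rfl <;>
    (simp only [mexpd0, mexpd1, mexpd2, mexpd3, mexpd4, mexpd5, coeff_add, coeff_T, tr_eq_tr,
        zero_add, add_zero, true_and, and_true]
     simp only [show ((5:Fin 6)) = (4:Fin 5).succ from rfl, Matrix.cons_val_succ,
        Matrix.cons_val_zero, Matrix.cons_val_one, Matrix.head_cons, Matrix.cons_val_two,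
        Matrix.tail_cons, Matrix.cons_val_three, Matrix.cons_val_four, Matrix.cons_val',
        Matrix.cons_val_fin_one, Matrix.empty_val', Matrix.head_fin_const, if_true, if_false]
     split_ifs <;>
       first
         | omega
         | (field_simp; try ring)
         | norm_num)


lemma sys_eq (a : K) (N : ℕ) (hN : 2 ≤ N) (hchar : (N : K) ≠ 0) :
    sys a N = !![a, a, a, 0, -1, 0;
                 0, 0, a, 0, a, 0;
                 0, 0, a, 0, a, 1+a;
                 -a^3, 0, a^2, 0, 0, 0;
                 a, a, 2*a, 0, a, a;
                 0, -2*a, 0, -a, -a, 0] := by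
  funext r q
  have hr : r = 0 ∨ r = 1 ∨ r = 2 ∨ r = 3 ∨ r = 4 ∨ r = 5 := by revert r; decide
  rcases hr with rfl | rfl | rfl | rfl | rfl | rfl
  · rw [row0 a N hN hchar q]; rfl
  · rw [row1 a N hN hchar q]; rfl
  · rw [row2 a N hN hchar q]; rfl
  · rw [row3 a N hN hchar q]; rfl
  · rw [row4 a N hN hchar q]; rfl
  · rw [row5 a N hN hchar q]; rfl

set_option maxRecDepth 40000 in
set_option maxHeartbeats 6000000 in
lemma detM (a : K) :
    (Matrix.det !![a, a, a, 0, -1, 0;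
                 0, 0, a, 0, a, 0;
                 0, 0, a, 0, a, 1+a;
                 -a^3, 0, a^2, 0, 0, 0;
                 a, a, 2*a, 0, a, a;
                 0, -2*a, 0, -a, -a, 0]) = a ^ 7 + a ^ 6 := by
  simp [Matrix.det_succ_row_zero, Fin.sum_univ_succ, Fin.succAbove]
  ring

/-- The determinant of the `6 × 6` coefficient matrix of the system equals
`a⁷ + a⁶` up to sign; in particular it is nonzero for `a ∉ {0, -1}`. -/
theorem det_sys (a : K) (N : ℕ) (hN : 2 ≤ N) (hchar : (N : K) ≠ 0) :
    (Matrix.det (sys a N) = a ^ 7 + a ^ 6 ∨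
      Matrix.det (sys a N) = -(a ^ 7 + a ^ 6)) ∧
    (a ≠ 0 → a ≠ -1 → Matrix.det (sys a N) ≠ 0) := by
  have hdet : Matrix.det (sys a N) = a ^ 7 + a ^ 6 := by
    rw [sys_eq a N hN hchar, detM]
  refine ⟨Or.inl hdet, fun h0 h1 => ?_⟩
  rw [hdet, show a ^ 7 + a ^ 6 = a ^ 6 * (a + 1) from by ring]
  refine mul_ne_zero (pow_ne_zero _ h0) fun h => ?_
  exact h1 (by linear_combination h)

end
end Stmt4
end

section
/- Let K be a field, R = K[[x_1,...,x_s]] with maximal ideal 𝔪, and A ∈ M_{m,n}. Define the extended tangent image T̃^e_A(GA) as the R-submodule of M_{m,n} generated by the matrices E_{m,pq}·A (p,q = 1,...,m), A·E_{n,hl} (h,l = 1,...,n), and ∂A/∂x_ν (ν = 1,...,s), and the tangent image T̃_A(GA) as the submodule generated by E_{m,pq}·A, A·E_{n,hl}, and 𝔪·∂A/∂x_ν. Then dim_K(M_{m,n}/T̃^e_A(GA)) < ∞ if and only if dim_K(𝔪·M_{m,n}/T̃_A(GA)) < ∞. -/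
noncomputable section
namespace FDM

/-- The partial derivative `∂/∂x_i` on `K[[x_1,…,x_s]]`. -/
def pd {K : Type*} [Field K] {s : ℕ} (i : Fin s)
    (f : MvPowerSeries (Fin s) K) : MvPowerSeries (Fin s) K :=
  fun e => (e i + 1) • MvPowerSeries.coeff (e + Finsupp.single i 1) f

/-- The maximal ideal `𝔪 = ⟨x_1,…,x_s⟩` of `K[[x_1,…,x_s]]`. -/
def mI (K : Type*) [Field K] (s : ℕ) : Ideal (MvPowerSeries (Fin s) K) :=
  RingHom.ker (MvPowerSeries.constantCoeff (σ := Fin s) (R := K))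

variable {K : Type*} [Field K] {s m n : ℕ}

open MvPowerSeries

lemma mem_mI {f : MvPowerSeries (Fin s) K} :
    f ∈ mI K s ↔ constantCoeff (σ := Fin s) (R := K) f = 0 := Iff.rfl

lemma X_mem_mI (i : Fin s) : (X i : MvPowerSeries (Fin s) K) ∈ mI K s := by
  simp [mem_mI, constantCoeff_X]

/-- total degree of an exponent -/
def deg {s : ℕ} (e : Fin s →₀ ℕ) : ℕ := ∑ j, e j

lemma apply_le_deg (e : Fin s →₀ ℕ) (j : Fin s) : e j ≤ deg e :=
  Finset.single_le_sum (fun _ _ => Nat.zero_le _) (Finset.mem_univ j)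

lemma deg_add_single (e : Fin s →₀ ℕ) (i : Fin s) :
    deg (e + Finsupp.single i 1) = deg e + 1 := by
  simp only [deg, Finsupp.add_apply]
  rw [Finset.sum_add_distrib]
  congr 1
  simp [Finsupp.single_apply]

lemma mem_mI_pow {k : ℕ} {f : MvPowerSeries (Fin s) K}
    (hf : ∀ e : Fin s →₀ ℕ, deg e < k → coeff e f = 0) : f ∈ (mI K s) ^ k := by
  induction k generalizing f with
  | zero => simp
  | succ k ih =>
    classical
    set g : Fin s → MvPowerSeries (Fin s) K := fun i e =>
      if ∀ j < i, e j = 0 then coeff (e + Finsupp.single i 1) f else 0 with hg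
    have hgc : ∀ i e, coeff e (g i) =
        if ∀ j < i, e j = 0 then coeff (e + Finsupp.single i 1) f else 0 := fun i e => rfl
    have hfg : f = ∑ i, X i * g i := by
      ext d
      rw [map_sum]
      by_cases hd : d = 0
      · subst hd
        have h0 : coeff 0 f = 0 := hf 0 (by simp [deg])
        rw [h0]
        refine (Finset.sum_eq_zero fun i _ => ?_).symm
        rw [X, coeff_monomial_mul]
        rw [if_neg]
        intro hle
        have := hle i
        simp [Finsupp.single_apply] at this
      · -- least index
        have hsupp : d.support.Nonempty := by
          rw [Finsupp.support_nonempty_iff]; exact hd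
        set i₀ := d.support.min' hsupp with hi₀
        have hdi₀ : d i₀ ≠ 0 := Finsupp.mem_support_iff.mp (d.support.min'_mem hsupp)
        have hlt : ∀ j < i₀, d j = 0 := by
          intro j hj
          by_contra hne
          exact absurd (d.support.min'_le j (Finsupp.mem_support_iff.mpr hne)) (not_le.mpr hj)
        have key : ∀ i : Fin s, coeff d (X i * g i) =
            if d i ≠ 0 ∧ ∀ j < i, d j = 0 then coeff d f else 0 := by
          intro i
          rw [X, coeff_monomial_mul, hgc]
          have hsle : Finsupp.single i 1 ≤ d ↔ d i ≠ 0 := by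
            rw [Finsupp.single_le_iff]
            omega
          by_cases h1 : d i ≠ 0
          · have hcond : (∀ j < i, (d - Finsupp.single i 1 : Fin s →₀ ℕ) j = 0) ↔
                ∀ j < i, d j = 0 := by
              apply forall₂_congr
              intro j hj
              rw [Finsupp.tsub_apply, Finsupp.single_apply, if_neg (ne_of_gt hj), Nat.sub_zero]
            have hadd : d - Finsupp.single i 1 + Finsupp.single i 1 = d :=
              tsub_add_cancel_of_le (hsle.mpr h1)
            rw [if_pos (hsle.mpr h1), hadd, one_mul]
            by_cases h2 : ∀ j < i, d j = 0
            · rw [if_pos (hcond.mpr h2), if_pos ⟨h1, h2⟩]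
            · rw [if_neg (fun hc => h2 (hcond.mp hc)), if_neg (fun hc => h2 hc.2)]
          · rw [if_neg (fun hc => h1 (hsle.mp hc)), if_neg (fun hc => h1 hc.1)]
        rw [Finset.sum_congr rfl (fun i _ => key i)]
        rw [Finset.sum_eq_single i₀]
        · rw [if_pos ⟨hdi₀, hlt⟩]
        · intro i _ hne
          rw [if_neg]
          rintro ⟨h1, h2⟩
          have hii : i₀ ≤ i := d.support.min'_le i (Finsupp.mem_support_iff.mpr h1)
          have : i₀ < i := lt_of_le_of_ne hii (Ne.symm hne)
          exact hdi₀ (h2 i₀ this)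
        · intro h; exact absurd (Finset.mem_univ i₀) h
    have hgdeg : ∀ i, g i ∈ (mI K s) ^ k := by
      intro i
      apply ih
      intro e he
      rw [hgc]
      split_ifs with h
      · exact hf _ (by rw [deg_add_single]; omega)
      · rfl
    rw [hfg, pow_succ']
    exact Ideal.sum_mem _ fun i _ =>
      Ideal.mul_mem_mul (X_mem_mI i) (hgdeg i)

lemma matrix_mem_smul_top {I : Ideal (MvPowerSeries (Fin s) K)}
    {B : Matrix (Fin m) (Fin n) (MvPowerSeries (Fin s) K)}
    (hB : ∀ i j, B i j ∈ I) :
    B ∈ I • (⊤ : Submodule (MvPowerSeries (Fin s) K)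
      (Matrix (Fin m) (Fin n) (MvPowerSeries (Fin s) K))) := by
  rw [Matrix.matrix_eq_sum_single B]
  refine Submodule.sum_mem _ fun i _ => Submodule.sum_mem _ fun j _ => ?_
  have h : Matrix.single i j (B i j) =
      (B i j) • Matrix.single i j (1 : MvPowerSeries (Fin s) K) := by
    rw [Matrix.smul_single, smul_eq_mul, mul_one]
  rw [h]
  exact Submodule.smul_mem_smul (hB i j) trivial

lemma finite_quotient_pow (k : ℕ) :
    Module.Finite K
      (Matrix (Fin m) (Fin n) (MvPowerSeries (Fin s) K) ⧸
        ((mI K s ^ k) • (⊤ : Submodule (MvPowerSeries (Fin s) K)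
          (Matrix (Fin m) (Fin n) (MvPowerSeries (Fin s) K))))) := by
  classical
  set R' := MvPowerSeries (Fin s) K
  set M' := Matrix (Fin m) (Fin n) R'
  set N : Submodule R' M' := (mI K s ^ k) • ⊤ with hN
  have hfin : {e : Fin s →₀ ℕ | deg e < k}.Finite := by
    rw [← Set.finite_coe_iff]
    refine Finite.of_injective
      (fun e j => (⟨e.1 j, lt_of_le_of_lt (apply_le_deg _ _) e.2⟩ : Fin k)) ?_
    intro a b h
    refine Subtype.ext (Finsupp.ext fun j => ?_)
    exact congrArg Fin.val (congrFun h j)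
  set Ek : Finset (Fin s →₀ ℕ) := hfin.toFinset with hEk
  set v : (Fin m × Fin n) × (Fin s →₀ ℕ) → M' := fun x =>
    Matrix.single x.1.1 x.1.2 (monomial x.2 (1 : K)) with hv
  set S : Set (M' ⧸ N) := N.mkQ '' (v '' (Set.univ ×ˢ {e | deg e < k})) with hS
  have hSfin : S.Finite :=
    ((Set.finite_univ.prod hfin).image v).image _
  rw [Module.finite_def, Submodule.fg_def]
  refine ⟨S, hSfin, ?_⟩
  rw [Submodule.eq_top_iff']
  intro x
  obtain ⟨B, rfl⟩ := N.mkQ_surjective x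
  set C : M' := Matrix.of fun p q => ∑ e ∈ Ek,
    (coeff e (B p q)) • (monomial e (1 : K)) with hC
  have hCpq : ∀ p q, C p q = ∑ e ∈ Ek, (coeff e (B p q)) • (monomial e (1 : K)) :=
    fun p q => rfl
  have hCsum : C = ∑ p : Fin m, ∑ q : Fin n, ∑ e ∈ Ek,
      (coeff e (B p q)) • Matrix.single p q (monomial e (1 : K)) := by
    ext p q
    simp only [Matrix.sum_apply, Matrix.smul_apply, Matrix.single, Matrix.of_apply,
      smul_ite, smul_zero, Finset.sum_ite_irrel, Finset.sum_const_zero]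
    rw [Finset.sum_eq_single p]
    · rw [Finset.sum_eq_single q]
      · simp [hCpq]
      · intro q' _ hq'
        rw [if_neg (fun hc : p = p ∧ q' = q => hq' hc.2)]
      · intro h; exact absurd (Finset.mem_univ q) h
    · intro p' _ hp'
      refine Finset.sum_eq_zero fun q' _ => ?_
      rw [if_neg (fun hc : p' = p ∧ q' = q => hp' hc.1)]
    · intro h; exact absurd (Finset.mem_univ p) h
  have hBC : B - C ∈ N := by
    rw [hN]
    apply matrix_mem_smul_top
    intro p q
    apply mem_mI_pow
    intro e he
    have heEk : e ∈ Ek := by rw [hEk, Set.Finite.mem_toFinset]; exact he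
    rw [Matrix.sub_apply, map_sub, hCpq, map_sum]
    rw [Finset.sum_eq_single e]
    · rw [map_smul, coeff_monomial_same, smul_eq_mul, mul_one, sub_self]
    · intro e' _ he'
      rw [map_smul, coeff_monomial, if_neg (Ne.symm he'), smul_zero]
    · intro h; exact absurd heEk h
  have hmk : N.mkQ B = N.mkQ C := by
    rw [← sub_eq_zero, ← map_sub, Submodule.mkQ_apply, Submodule.Quotient.mk_eq_zero]
    exact hBC
  rw [hmk, hCsum, map_sum]
  refine Submodule.sum_mem _ fun p _ => ?_
  rw [map_sum]
  refine Submodule.sum_mem _ fun q _ => ?_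
  rw [map_sum]
  refine Submodule.sum_mem _ fun e heEk => ?_
  have hsm : N.mkQ ((coeff e (B p q)) • Matrix.single p q (monomial e (1 : K)))
      = (coeff e (B p q)) • N.mkQ (Matrix.single p q (monomial e (1 : K))) :=
    LinearMap.map_smul_of_tower _ _ _
  rw [hsm]
  refine Submodule.smul_mem _ _ (Submodule.subset_span ?_)
  have heEk' : deg e < k := by rwa [hEk, Set.Finite.mem_toFinset] at heEk
  exact ⟨v ((p, q), e), ⟨((p, q), e), ⟨Set.mem_univ _, heEk'⟩, rfl⟩, rfl⟩

lemma exists_succ_eq {f : ℕ → ℕ} (hf : ∀ k, f (k + 1) ≤ f k) : ∃ N, f (N + 1) = f N := by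
  by_contra h
  push_neg at h
  have hd : ∀ k, f (k + 1) < f k := fun k => lt_of_le_of_ne (hf k) (h k)
  have key : ∀ k, f k + k ≤ f 0 := by
    intro k
    induction k with
    | zero => simp
    | succ k ih => have := hd k; omega
  have := key (f 0 + 1)
  omega

lemma finite_of_sub_quot {V : Type*} [AddCommGroup V] [Module K V] (S : Submodule K V)
    (h1 : Module.Finite K S) (h2 : Module.Finite K (V ⧸ S)) : Module.Finite K V := by
  rw [Module.finite_def]
  apply Submodule.fg_of_fg_map_of_fg_inf_ker S.mkQ
  · rw [Submodule.map_top, Submodule.range_mkQ]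
    exact Module.finite_def.mp h2
  · rw [top_inf_eq, Submodule.ker_mkQ]
    exact Module.Finite.iff_fg.mp h1

lemma fg_of_finiteK {V : Type*} [AddCommGroup V]
    [Module (MvPowerSeries (Fin s) K) V] [Module K V]
    [IsScalarTower K (MvPowerSeries (Fin s) K) V] [Module.Finite K V]
    (S : Submodule (MvPowerSeries (Fin s) K) V) : S.FG := by
  have hn : IsNoetherian K V := IsNoetherian.iff_fg.mpr inferInstance
  obtain ⟨t, ht⟩ := hn.noetherian (S.restrictScalars K)
  refine ⟨t, le_antisymm (Submodule.span_le.mpr ?_) ?_⟩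
  · have h := Submodule.subset_span (R := K) (s := (t : Set V))
    rw [ht] at h
    exact h
  · intro x hx
    have : x ∈ Submodule.span K (t : Set V) := by rw [ht]; exact hx
    exact Submodule.span_le_restrictScalars K _ _ this

lemma mI_le_jacobson_bot :
    mI K s ≤ (⊥ : Ideal (MvPowerSeries (Fin s) K)).jacobson := by
  rw [IsLocalRing.jacobson_eq_maximalIdeal ⊥ bot_ne_top]
  intro f hf
  rw [IsLocalRing.mem_maximalIdeal, mem_nonunits_iff]
  intro hu
  rw [isUnit_iff_constantCoeff, mem_mI.mp hf] at hu
  exact not_isUnit_zero hu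


lemma pow_smul_top_eq_bot {V : Type*} [AddCommGroup V]
    [Module (MvPowerSeries (Fin s) K) V] [Module K V]
    [IsScalarTower K (MvPowerSeries (Fin s) K) V] [Module.Finite K V] :
    ∃ N : ℕ, (mI K s ^ N) • (⊤ : Submodule (MvPowerSeries (Fin s) K) V) = ⊥ := by
  set R' := MvPowerSeries (Fin s) K
  have hstep : ∀ k (P : Submodule R' V), (mI K s ^ (k + 1)) • P = mI K s ^ k • (mI K s • P) :=
    fun k P => by rw [pow_succ, ← Ideal.smul_eq_mul, Submodule.smul_assoc]
  have hstep' : ∀ k (P : Submodule R' V), (mI K s ^ (k + 1)) • P = mI K s • (mI K s ^ k • P) :=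
    fun k P => by rw [pow_succ', ← Ideal.smul_eq_mul, Submodule.smul_assoc]
  have hdec : ∀ k, (mI K s ^ (k + 1)) • (⊤ : Submodule R' V) ≤ (mI K s ^ k) • ⊤ := by
    intro k
    rw [hstep]
    exact smul_mono_right _ Submodule.smul_le_right
  obtain ⟨N₀, hN₀⟩ := exists_succ_eq
    (f := fun k => Module.finrank K
      (((mI K s ^ k) • (⊤ : Submodule R' V)).restrictScalars K))
    (fun k => Submodule.finrank_mono (hdec k))
  have heq : (mI K s ^ (N₀ + 1)) • (⊤ : Submodule R' V) = (mI K s ^ N₀) • ⊤ := by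
    apply Submodule.restrictScalars_injective K
    exact Submodule.eq_of_le_of_finrank_le (hdec N₀) hN₀.ge
  refine ⟨N₀, ?_⟩
  refine Submodule.eq_bot_of_le_smul_of_le_jacobson_bot (mI K s) _ (fg_of_finiteK _) ?_
    mI_le_jacobson_bot
  conv_lhs => rw [← heq, hstep']

/-- The extended tangent image `T̃ᵉ_A(GA)`: the `R`-submodule of `M_{m,n}`
generated by the `E_{m,pq}·A`, the `A·E_{n,hl}`, and the `∂A/∂x_ν`. -/
def Text (A : Matrix (Fin m) (Fin n) (MvPowerSeries (Fin s) K)) :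
    Submodule (MvPowerSeries (Fin s) K)
      (Matrix (Fin m) (Fin n) (MvPowerSeries (Fin s) K)) :=
  Submodule.span _
    ((Set.range fun pq : Fin m × Fin m => Matrix.single pq.1 pq.2 (1 : MvPowerSeries (Fin s) K) * A) ∪
     (Set.range fun hl : Fin n × Fin n => A * Matrix.single hl.1 hl.2 (1 : MvPowerSeries (Fin s) K)) ∪
     (Set.range fun ν : Fin s => A.map (pd ν)))

/-- The tangent image `T̃_A(GA)`: the `R`-submodule of `M_{m,n}` generated by
the `E_{m,pq}·A`, the `A·E_{n,hl}`, and `𝔪·⟨∂A/∂x_ν⟩`. -/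
def T (A : Matrix (Fin m) (Fin n) (MvPowerSeries (Fin s) K)) :
    Submodule (MvPowerSeries (Fin s) K)
      (Matrix (Fin m) (Fin n) (MvPowerSeries (Fin s) K)) :=
  Submodule.span _
    ((Set.range fun pq : Fin m × Fin m => Matrix.single pq.1 pq.2 (1 : MvPowerSeries (Fin s) K) * A) ∪
     (Set.range fun hl : Fin n × Fin n => A * Matrix.single hl.1 hl.2 (1 : MvPowerSeries (Fin s) K))) +
  mI K s • Submodule.span _ (Set.range fun ν : Fin s => A.map (pd ν))

/-- The submodule `𝔪·M_{m,n}`. -/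
def mM (K : Type*) [Field K] (s m n : ℕ) :
    Submodule (MvPowerSeries (Fin s) K)
      (Matrix (Fin m) (Fin n) (MvPowerSeries (Fin s) K)) :=
  mI K s • ⊤

lemma T_le_Text (A : Matrix (Fin m) (Fin n) (MvPowerSeries (Fin s) K)) : T A ≤ Text A := by
  rw [T, Submodule.add_eq_sup]
  apply sup_le
  · rw [Text]
    exact Submodule.span_mono Set.subset_union_left
  · refine le_trans Submodule.smul_le_right ?_
    rw [Text]
    exact Submodule.span_mono Set.subset_union_right

lemma smul_Text_le_T (A : Matrix (Fin m) (Fin n) (MvPowerSeries (Fin s) K)) :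
    mI K s • Text A ≤ T A := by
  have hsplit : Text A ≤
      Submodule.span (MvPowerSeries (Fin s) K)
        ((Set.range fun pq : Fin m × Fin m =>
            Matrix.single pq.1 pq.2 (1 : MvPowerSeries (Fin s) K) * A) ∪
         (Set.range fun hl : Fin n × Fin n =>
            A * Matrix.single hl.1 hl.2 (1 : MvPowerSeries (Fin s) K))) ⊔
      Submodule.span (MvPowerSeries (Fin s) K)
        (Set.range fun ν : Fin s => A.map (pd ν)) := by
    rw [Text, Submodule.span_le]
    rintro x (h | h)
    · exact Submodule.mem_sup_left (Submodule.subset_span h)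
    · exact Submodule.mem_sup_right (Submodule.subset_span h)
  refine le_trans (smul_mono_right _ hsplit) ?_
  rw [Submodule.smul_sup, T, Submodule.add_eq_sup]
  exact sup_le_sup Submodule.smul_le_right le_rfl

lemma T_le_mM (A : Matrix (Fin m) (Fin n) (MvPowerSeries (Fin s) K))
    (hA : ∀ i j, A i j ∈ mI K s) : T A ≤ mM K s m n := by
  rw [T, Submodule.add_eq_sup, mM]
  apply sup_le
  · rw [Submodule.span_le]
    rintro B (⟨pq, rfl⟩ | ⟨hl, rfl⟩) <;> dsimp only <;> apply matrix_mem_smul_top <;> intro i j <;>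
      rw [Matrix.mul_apply] <;> refine Submodule.sum_mem _ fun l _ => ?_ <;>
      simp only [Matrix.single, Matrix.of_apply] <;> split_ifs with h
    · rw [one_mul]; exact hA l j
    · rw [zero_mul]; exact Submodule.zero_mem _
    · rw [mul_one]; exact hA i l
    · rw [mul_zero]; exact Submodule.zero_mem _
  · exact smul_mono_right _ le_top

set_option maxHeartbeats 1000000 in
set_option synthInstance.maxHeartbeats 400000 in
theorem finiteness_equiv (A : Matrix (Fin m) (Fin n) (MvPowerSeries (Fin s) K))
    (hA : ∀ i j, A i j ∈ mI K s) :
    FiniteDimensional K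
        (Matrix (Fin m) (Fin n) (MvPowerSeries (Fin s) K) ⧸ Text A) ↔
      FiniteDimensional K
        (↥(mM K s m n) ⧸ Submodule.comap (mM K s m n).subtype (T A)) := by
  classical
  constructor
  · -- forward
    intro hfin
    haveI := hfin
    obtain ⟨N₀, hbot⟩ := pow_smul_top_eq_bot (K := K) (s := s)
      (V := Matrix (Fin m) (Fin n) (MvPowerSeries (Fin s) K) ⧸ Text A)
    have hsub : (mI K s ^ N₀) • (⊤ : Submodule (MvPowerSeries (Fin s) K)
        (Matrix (Fin m) (Fin n) (MvPowerSeries (Fin s) K))) ≤ Text A := by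
      intro x hx
      have hmem : (Text A).mkQ x ∈ (mI K s ^ N₀) • (⊤ : Submodule (MvPowerSeries (Fin s) K)
          (Matrix (Fin m) (Fin n) (MvPowerSeries (Fin s) K) ⧸ Text A)) := by
        have h0 := Submodule.mem_map_of_mem (f := (Text A).mkQ) hx
        rwa [Submodule.map_smul'', Submodule.map_top, Submodule.range_mkQ] at h0
      rw [hbot, Submodule.mem_bot] at hmem
      rwa [← Submodule.ker_mkQ (Text A), LinearMap.mem_ker]
    have hTle : (mI K s ^ (N₀ + 1)) • (⊤ : Submodule (MvPowerSeries (Fin s) K)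
        (Matrix (Fin m) (Fin n) (MvPowerSeries (Fin s) K))) ≤ T A := by
      rw [pow_succ', ← Ideal.smul_eq_mul, Submodule.smul_assoc]
      exact le_trans (smul_mono_right _ hsub) (smul_Text_le_T A)
    set P : Submodule (MvPowerSeries (Fin s) K)
        (Matrix (Fin m) (Fin n) (MvPowerSeries (Fin s) K)) :=
      (mI K s ^ (N₀ + 1)) • ⊤ with hP
    set φ : ↥(mM K s m n) →ₗ[MvPowerSeries (Fin s) K]
        (Matrix (Fin m) (Fin n) (MvPowerSeries (Fin s) K) ⧸ P) :=
      P.mkQ ∘ₗ (mM K s m n).subtype with hφ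
    have hker : LinearMap.ker φ = Submodule.comap (mM K s m n).subtype P := by
      rw [hφ, LinearMap.ker_comp, Submodule.ker_mkQ]
    haveI hfinP : Module.Finite K
        (Matrix (Fin m) (Fin n) (MvPowerSeries (Fin s) K) ⧸ P) := finite_quotient_pow (N₀ + 1)
    haveI hfinR : Module.Finite K (LinearMap.range φ) := by
      haveI h5 : Module.Finite K ((LinearMap.range φ).restrictScalars K) :=
        FiniteDimensional.finiteDimensional_submodule _
      exact Module.Finite.equiv
        ((Submodule.restrictScalarsEquiv K _ _ (LinearMap.range φ)).restrictScalars K)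
    have hfin3 : Module.Finite K (↥(mM K s m n) ⧸ LinearMap.ker φ) :=
      Module.Finite.equiv ((φ.quotKerEquivRange).restrictScalars K).symm
    rw [hker] at hfin3
    set ψ := Submodule.mapQ (Submodule.comap (mM K s m n).subtype P)
      (Submodule.comap (mM K s m n).subtype (T A)) LinearMap.id
      (fun x hx => Submodule.comap_mono hTle hx) with hψ
    have hs : Function.Surjective ψ := by
      intro y
      obtain ⟨z, rfl⟩ := Submodule.mkQ_surjective _ y
      exact ⟨Submodule.mkQ _ z, by simp [hψ, Submodule.mkQ_apply, Submodule.mapQ_apply]⟩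
    exact Module.Finite.of_surjective (ψ.restrictScalars K) hs
  · -- backward
    intro hfin
    set φ : ↥(mM K s m n) →ₗ[MvPowerSeries (Fin s) K]
        (Matrix (Fin m) (Fin n) (MvPowerSeries (Fin s) K) ⧸ T A) :=
      (T A).mkQ ∘ₗ (mM K s m n).subtype with hφ
    have hker : LinearMap.ker φ = Submodule.comap (mM K s m n).subtype (T A) := by
      rw [hφ, LinearMap.ker_comp, Submodule.ker_mkQ]
    haveI hfin' : Module.Finite K (↥(mM K s m n) ⧸ LinearMap.ker φ) := by
      rw [hker]; exact hfin
    haveI hr : Module.Finite K (LinearMap.range φ) :=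
      Module.Finite.equiv ((φ.quotKerEquivRange).restrictScalars K)
    have hrange : LinearMap.range φ = Submodule.map (T A).mkQ (mM K s m n) := by
      rw [hφ, LinearMap.range_comp, Submodule.range_subtype]
    haveI hfinq : Module.Finite K
        (Matrix (Fin m) (Fin n) (MvPowerSeries (Fin s) K) ⧸ mM K s m n) := by
      have h6 := finite_quotient_pow (K := K) (s := s) (m := m) (n := n) 1
      rwa [pow_one] at h6
    haveI hfinq2 : Module.Finite K
        ((Matrix (Fin m) (Fin n) (MvPowerSeries (Fin s) K) ⧸ T A) ⧸
          Submodule.map (T A).mkQ (mM K s m n)) :=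
      Module.Finite.equiv
        (((Submodule.quotientQuotientEquivQuotient (T A) (mM K s m n)
          (T_le_mM A hA)).restrictScalars K).symm)
    have hfinT : Module.Finite K
        (Matrix (Fin m) (Fin n) (MvPowerSeries (Fin s) K) ⧸ T A) := by
      refine finite_of_sub_quot
        ((Submodule.map (T A).mkQ (mM K s m n)).restrictScalars K) ?_ ?_
      · rw [hrange] at hr
        exact Module.Finite.equiv
          ((Submodule.restrictScalarsEquiv K _ _
            (Submodule.map (T A).mkQ (mM K s m n))).restrictScalars K).symm
      · exact Module.Finite.equiv
          ((Submodule.Quotient.restrictScalarsEquiv K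
            (Submodule.map (T A).mkQ (mM K s m n))).restrictScalars K).symm
    haveI := hfinT
    set ψ := Submodule.mapQ (T A) (Text A) LinearMap.id (fun x hx => T_le_Text A hx) with hψ
    have hs : Function.Surjective ψ := by
      intro y
      obtain ⟨z, rfl⟩ := Submodule.mkQ_surjective _ y
      exact ⟨Submodule.mkQ _ z, by simp [hψ, Submodule.mkQ_apply, Submodule.mapQ_apply]⟩
    exact Module.Finite.of_surjective (ψ.restrictScalars K) hs

end FDM
end
end
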